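/- For every ε > 0 there exist a dimension d and vectors v, w ∈ ℝ^d with non-negative entries, ‖v‖₂ = ‖w‖₂ = 1, 0 < ⟨v, w⟩ ≤ ε, and 2·|v|₁·|w|₁ ≤ ⟨v, w⟩·(|v|₁² + |w|₁²). In other words, the inner products for which the feasibility inequality can be achieved tend to zero as the dimension grows. -/

import Mathlib

open scoped BigOperators

theorem stmt15 (ε : ℝ) (hε : 0 < ε) :
    ∃ (d : ℕ) (v w : Fin d → ℝ),
      (∀ k, 0 ≤ v k) ∧ (∀ k, 0 ≤ w k) ∧
      (∑ k, v k ^ 2) = 1 ∧ (∑ k, w k ^ 2) = 1 ∧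
      0 < (∑ k, v k * w k) ∧ (∑ k, v k * w k) ≤ ε ∧
      2 * (∑ k, |v k|) * (∑ k, |w k|) ≤
        (∑ k, v k * w k) * ((∑ k, |v k|) ^ 2 + (∑ k, |w k|) ^ 2) := by
  set δ : ℝ := min ε 1 / 2 with hδdef
  have hδpos : 0 < δ := by
    have : 0 < min ε 1 := lt_min hε one_pos
    positivity
  have hδhalf : δ ≤ 1/2 := by
    have : min ε 1 ≤ 1 := min_le_right _ _
    simp only [hδdef]; linarith
  have hδε : δ ≤ ε := by
    have : min ε 1 ≤ ε := min_le_left _ _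
    simp only [hδdef]; linarith
  set n : ℕ := ⌈(16:ℝ)/δ^2⌉₊ with hn
  have hnle : (16:ℝ)/δ^2 ≤ n := Nat.le_ceil _
  have hnpos : 0 < (n:ℝ) := lt_of_lt_of_le (by positivity) hnle
  have hδ2 : 1 - δ^2 ≥ 3/4 := by nlinarith
  set c : ℝ := Real.sqrt ((1 - δ^2)/n) with hc
  have hcnn : 0 ≤ c := Real.sqrt_nonneg _
  have hc2 : c^2 = (1 - δ^2)/n := Real.sq_sqrt (by positivity)
  refine ⟨n+1, fun k => if k = 0 then 1 else 0, fun k => if k = 0 then δ else c,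
    ?_, ?_, ?_, ?_, ?_, ?_, ?_⟩
  · intro k; simp only []; split <;> norm_num
  · intro k; simp only []; split
    · exact hδpos.le
    · exact hcnn
  · simp [Fin.sum_univ_succ, Fin.succ_ne_zero]
  · have : (∑ k : Fin (n+1), (if k = 0 then δ else c)^2) = δ^2 + n * c^2 := by
      simp [Fin.sum_univ_succ, Fin.succ_ne_zero]
    rw [this, hc2]
    field_simp
    ring
  · have : (∑ k : Fin (n+1), (if k = 0 then (1:ℝ) else 0) * (if k = 0 then δ else c)) = δ := by
      simp [Fin.sum_univ_succ, Fin.succ_ne_zero]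
    rw [this]; exact hδpos
  · have : (∑ k : Fin (n+1), (if k = 0 then (1:ℝ) else 0) * (if k = 0 then δ else c)) = δ := by
      simp [Fin.sum_univ_succ, Fin.succ_ne_zero]
    rw [this]; exact hδε
  · have h1 : (∑ k : Fin (n+1), |if k = 0 then (1:ℝ) else 0|) = 1 := by
      simp [Fin.sum_univ_succ, Fin.succ_ne_zero]
    have h2 : (∑ k : Fin (n+1), |if k = 0 then δ else c|) = δ + n * c := by
      simp [Fin.sum_univ_succ, Fin.succ_ne_zero, abs_of_nonneg hδpos.le,
        abs_of_nonneg hcnn]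
    have h3 : (∑ k : Fin (n+1), (if k = 0 then (1:ℝ) else 0) * (if k = 0 then δ else c)) = δ := by
      simp [Fin.sum_univ_succ, Fin.succ_ne_zero]
    rw [h1, h2, h3]
    set S : ℝ := (n:ℝ) * c with hS
    have hSnn : 0 ≤ S := by positivity
    have hS2 : S^2 = n * (1 - δ^2) := by
      rw [hS]; rw [mul_pow, hc2]; field_simp
    have hkey : 2 ≤ δ * S := by
      have h4 : (δ * S)^2 ≥ 4 := by
        have : δ^2 * (n * (1 - δ^2)) ≥ δ^2 * ((16/δ^2) * (1 - δ^2)) := by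
          apply mul_le_mul_of_nonneg_left (by nlinarith) (by positivity)
        have h16 : δ^2 * ((16/δ^2) * (1 - δ^2)) = 16 * (1 - δ^2) := by
          field_simp
        nlinarith [hS2]
      nlinarith [mul_nonneg hδpos.le hSnn]
    nlinarith [sq_nonneg S, mul_nonneg hδpos.le hSnn, mul_le_mul_of_nonneg_right hkey hSnn]
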